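/- arXiv:2312.03274 — 4 statements merged into one kernel-verified Lean document; each statement's English description precedes it below -/
import Mathlib

section
/- For any real matrices A (N1-by-N2) and B (N2-by-N3), the nuclear norm of the product A B equals the nuclear norm of sqrt(A^T A) sqrt(B B^T). -/
open Matrix

open Classical in
/-- The unique positive semidefinite square root of a PSD matrix (junk value `0` otherwise). -/
noncomputable def msqrt {p : ℕ} (M : Matrix (Fin p) (Fin p) ℝ) : Matrix (Fin p) (Fin p) ℝ :=
  if h : M.PosSemidef then
    h.1.eigenvectorUnitary.1 * diagonal ((↑) ∘ (√·) ∘ h.1.eigenvalues) *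
      (star h.1.eigenvectorUnitary : Matrix (Fin p) (Fin p) ℝ) else 0

/-- Nuclear norm: sum of singular values, i.e. trace of the PSD square root of `Aᵀ * A`. -/
noncomputable def nuclearNorm {m n : ℕ} (A : Matrix (Fin m) (Fin n) ℝ) : ℝ :=
  (msqrt (A.transpose * A)).trace

section Aux

open Polynomial

variable {n m : ℕ}

lemma charpoly_unitary_conj (U D : Matrix (Fin n) (Fin n) ℝ) (hU : U * star U = 1)
    (hU' : star U * U = 1) : (U * D * star U).charpoly = D.charpoly := by
  have hmap : (U * D * star U).charmatrix
      = (U.map C) * D.charmatrix * ((star U).map C) := by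
    unfold charmatrix
    rw [Matrix.mul_sub, Matrix.sub_mul]
    congr 1
    · have hd : ((Matrix.scalar (Fin n)) (X : ℝ[X])) = (X : ℝ[X]) • 1 := by
        rw [scalar_apply, smul_eq_diagonal_mul]
        simp
      rw [hd, Matrix.mul_smul, mul_one, Matrix.smul_mul, ← Matrix.map_mul, hU]
      simp
    · simp only [RingHom.mapMatrix_apply]
      rw [← Matrix.map_mul, ← Matrix.map_mul]
  rw [Matrix.charpoly, hmap, det_mul, det_mul, mul_comm, ← mul_assoc, ← det_mul,
    ← Matrix.map_mul, hU']
  simp [Matrix.charpoly]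

lemma charmatrix_diagonal (d : Fin n → ℝ) :
    (Matrix.diagonal d).charmatrix = Matrix.diagonal fun i => (X : ℝ[X]) - C (d i) := by
  ext i j
  by_cases h : i = j
  · subst h; simp [charmatrix_apply_eq]
  · rw [charmatrix_apply_ne _ _ _ h, diagonal_apply_ne _ h, diagonal_apply_ne _ h]
    simp

/-- charpoly of a real symmetric matrix is the product over eigenvalues. -/
lemma charpoly_isHermitian {M : Matrix (Fin n) (Fin n) ℝ} (hM : M.IsHermitian) :
    M.charpoly = (Multiset.map (fun a => (X : ℝ[X]) - C a)
      (Multiset.map hM.eigenvalues Finset.univ.val)).prod := by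
  have hU := (Matrix.mem_unitaryGroup_iff).mp (hM.eigenvectorUnitary).2
  have hU' := (Matrix.mem_unitaryGroup_iff').mp (hM.eigenvectorUnitary).2
  calc M.charpoly
      = ((hM.eigenvectorUnitary : Matrix (Fin n) (Fin n) ℝ) *
          Matrix.diagonal hM.eigenvalues *
          star (hM.eigenvectorUnitary : Matrix (Fin n) (Fin n) ℝ)).charpoly := by
        congr 1
        convert hM.spectral_theorem using 2
        rw [Unitary.conjStarAlgAut_apply]; rfl
    _ = (Matrix.diagonal hM.eigenvalues).charpoly :=
        charpoly_unitary_conj _ _ hU hU'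
    _ = _ := by
        rw [Matrix.charpoly, _root_.charmatrix_diagonal, det_diagonal]
        rw [Multiset.map_map]
        rw [← Finset.prod_eq_multiset_prod]
        rfl

lemma roots_charpoly_isHermitian {M : Matrix (Fin n) (Fin n) ℝ} (hM : M.IsHermitian) :
    M.charpoly.roots = Multiset.map hM.eigenvalues Finset.univ.val := by
  rw [charpoly_isHermitian hM, Polynomial.roots_multiset_prod_X_sub_C]

lemma trace_msqrt {M : Matrix (Fin n) (Fin n) ℝ} (hM : M.PosSemidef) :
    (msqrt M).trace = ((M.charpoly.roots).map Real.sqrt).sum := by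
  have h1 : msqrt M = hM.1.eigenvectorUnitary.1 * diagonal ((↑) ∘ (√·) ∘ hM.1.eigenvalues) *
      (star hM.1.eigenvectorUnitary : Matrix (Fin n) (Fin n) ℝ) := dif_pos hM
  have hU' := (Matrix.mem_unitaryGroup_iff').mp (hM.1.eigenvectorUnitary).2
  rw [h1, Matrix.trace_mul_cycle, hU', one_mul,
    roots_charpoly_isHermitian hM.1, Multiset.map_map, trace_diagonal,
    ← Finset.sum_eq_multiset_sum]
  rfl

lemma eval_charpoly' (M : Matrix (Fin n) (Fin n) ℝ) (t : ℝ) :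
    M.charpoly.eval t = ((t • (1 : Matrix (Fin n) (Fin n) ℝ)) - M).det := by
  rw [Matrix.charpoly, ← Polynomial.coe_evalRingHom, RingHom.map_det]
  congr 1
  ext i j
  by_cases h : i = j
  · subst h; simp [charmatrix_apply_eq, Matrix.one_apply]
  · simp [charmatrix_apply_ne _ _ _ h, Matrix.one_apply_ne h]

lemma charpoly_mul_transpose (Y : Matrix (Fin m) (Fin n) ℝ) :
    (Yᵀ * Y).charpoly * X ^ m = (Y * Yᵀ).charpoly * X ^ n := by
  apply Polynomial.eq_of_infinite_eval_eq
  apply Set.Infinite.mono (s := {x : ℝ | x ≠ 0})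
  · intro t ht
    have ht : t ≠ 0 := ht
    have h1 : t • (1 : Matrix (Fin n) (Fin n) ℝ) - Yᵀ * Y
        = t • (1 - (t⁻¹ • Yᵀ) * Y) := by
      rw [smul_sub]
      congr 1
      rw [Matrix.smul_mul, smul_smul, mul_inv_cancel₀ ht, one_smul]
    have h2 : t • (1 : Matrix (Fin m) (Fin m) ℝ) - Y * Yᵀ
        = t • (1 - Y * (t⁻¹ • Yᵀ)) := by
      rw [smul_sub]
      congr 1
      rw [Matrix.mul_smul, smul_smul, mul_inv_cancel₀ ht, one_smul]
    show Polynomial.eval t _ = Polynomial.eval t _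
    rw [eval_mul, eval_mul, eval_pow, eval_pow, eval_X, eval_charpoly', eval_charpoly',
      h1, h2, det_smul, det_smul, Fintype.card_fin, Fintype.card_fin,
      det_one_sub_mul_comm]
    ring
  · have h := (Set.finite_singleton (0:ℝ)).infinite_compl
    have he : ({(0:ℝ)} : Set ℝ)ᶜ = {x : ℝ | x ≠ 0} := by ext x; simp
    rwa [he] at h

lemma trace_msqrt_comm (Y : Matrix (Fin m) (Fin n) ℝ) :
    (msqrt (Yᵀ * Y)).trace = (msqrt (Y * Yᵀ)).trace := by
  have hYt : Yᴴ = Yᵀ := rfl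
  have h1 : (Yᵀ * Y).PosSemidef := by
    rw [← hYt]; exact Matrix.posSemidef_conjTranspose_mul_self Y
  have h2 : (Y * Yᵀ).PosSemidef := by
    rw [← hYt]; exact Matrix.posSemidef_self_mul_conjTranspose Y
  rw [trace_msqrt h1, trace_msqrt h2]
  have key := congrArg Polynomial.roots (charpoly_mul_transpose Y)
  rw [Polynomial.roots_mul (mul_ne_zero (Matrix.charpoly_monic _).ne_zero (pow_ne_zero _ X_ne_zero)),
    Polynomial.roots_mul (mul_ne_zero (Matrix.charpoly_monic _).ne_zero (pow_ne_zero _ X_ne_zero)),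
    Polynomial.roots_pow, Polynomial.roots_pow, roots_X] at key
  have := congrArg (fun s : Multiset ℝ => (s.map Real.sqrt).sum) key
  simpa [Multiset.map_add, Multiset.sum_add, Multiset.map_nsmul, Multiset.map_singleton,
    Multiset.nsmul_singleton, Multiset.sum_replicate, Real.sqrt_zero] using this

end Aux

/-- `‖A * B‖_* = ‖√(Aᵀ A) * √(B Bᵀ)‖_*` where `S = √(Aᵀ A)` and `T = √(B Bᵀ)`
are the PSD square roots. -/
theorem stmt2 {N1 N2 N3 : ℕ}
    (A : Matrix (Fin N1) (Fin N2) ℝ) (B : Matrix (Fin N2) (Fin N3) ℝ)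
    (S T : Matrix (Fin N2) (Fin N2) ℝ)
    (hS : S.PosSemidef) (hSS : S * S = A.transpose * A)
    (hT : T.PosSemidef) (hTT : T * T = B * B.transpose) :
    nuclearNorm (A * B) = nuclearNorm (S * T) := by
  have hTt : Tᵀ = T := hT.1
  have hSt : Sᵀ = S := hS.1
  have e1 : (A * B) * (A * B)ᵀ = (A * T) * (A * T)ᵀ := by
    rw [transpose_mul, transpose_mul, hTt]
    rw [Matrix.mul_assoc A B, ← Matrix.mul_assoc B, ← hTT,
      Matrix.mul_assoc T, ← Matrix.mul_assoc A]
  have e2 : (A * T)ᵀ * (A * T) = (S * T)ᵀ * (S * T) := by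
    rw [transpose_mul, transpose_mul, hTt, hSt]
    rw [Matrix.mul_assoc T Aᵀ, ← Matrix.mul_assoc Aᵀ, ← hSS,
      Matrix.mul_assoc S, ← Matrix.mul_assoc T]
  show (msqrt ((A * B)ᵀ * (A * B))).trace = (msqrt ((S * T)ᵀ * (S * T))).trace
  rw [trace_msqrt_comm (A * B), e1, ← trace_msqrt_comm (A * T), e2]
end

section
/- Given a real N-by-P matrix X and a real P-by-K matrix L with K ≤ min(N,P), the minimum over all N-by-K matrices Z with orthonormal columns (Z^T Z = I_K) of the squared Frobenius norm ||X - Z L^T||_F^2 is achieved by Z = Polar.U(X L), the U factor of the polar decomposition of X L. -/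
open Matrix

noncomputable def frobSq {n p : ℕ} (A : Matrix (Fin n) (Fin p) ℝ) : ℝ := ∑ i, ∑ j, (A i j)^2

lemma frobSq_eq_trace {n p : ℕ} (A : Matrix (Fin n) (Fin p) ℝ) :
    frobSq A = (Aᵀ * A).trace := by
  simp only [frobSq, Matrix.trace, Matrix.diag, Matrix.mul_apply, Matrix.transpose_apply, sq]
  rw [Finset.sum_comm]

lemma frob_expand {N P K : ℕ} (X : Matrix (Fin N) (Fin P) ℝ) (L : Matrix (Fin P) (Fin K) ℝ)
    (Z : Matrix (Fin N) (Fin K) ℝ) (hZ : Zᵀ * Z = 1) :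
    frobSq (X - Z * Lᵀ) = (Xᵀ * X).trace + (Lᵀ * L).trace - 2 * (Zᵀ * X * L).trace := by
  rw [frobSq_eq_trace]
  have h1 : (X - Z * Lᵀ)ᵀ * (X - Z * Lᵀ)
      = Xᵀ * X - Xᵀ * Z * Lᵀ - L * (Zᵀ * X) + L * Lᵀ := by
    have : (Z * Lᵀ)ᵀ * (Z * Lᵀ) = L * (Zᵀ * Z) * Lᵀ := by
      simp [Matrix.transpose_mul, Matrix.mul_assoc]
    rw [Matrix.transpose_sub, Matrix.sub_mul, Matrix.mul_sub, Matrix.mul_sub, this, hZ]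
    simp [Matrix.transpose_mul, Matrix.mul_assoc]
    abel
  rw [h1]
  rw [Matrix.trace_add, Matrix.trace_sub, Matrix.trace_sub]
  have h2 : (Xᵀ * Z * Lᵀ).trace = (Zᵀ * X * L).trace := by
    have : (Xᵀ * Z * Lᵀ)ᵀ = L * (Zᵀ * X) := by
      simp [Matrix.transpose_mul, Matrix.mul_assoc]
    rw [← Matrix.trace_transpose (Xᵀ * Z * Lᵀ), this, Matrix.trace_mul_comm,
      Matrix.mul_assoc]
  have h3 : (L * (Zᵀ * X)).trace = (Zᵀ * X * L).trace := by
    rw [Matrix.trace_mul_comm]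
  have h4 : (L * Lᵀ).trace = (Lᵀ * L).trace := Matrix.trace_mul_comm L Lᵀ
  rw [h2, h3, h4]; ring

/-- Reduced-rank Procrustes: with `X * L = U * diagonal d * Vᵀ` an SVD, the matrix
`Z = U * Vᵀ` (the U factor of the polar decomposition of `X * L`) has orthonormal
columns and minimizes `‖X - Z Lᵀ‖_F²` over all `Z` with orthonormal columns. -/
theorem stmt3 {N P K : ℕ} (hKN : K ≤ N) (hKP : K ≤ P)
    (X : Matrix (Fin N) (Fin P) ℝ) (L : Matrix (Fin P) (Fin K) ℝ)
    (U : Matrix (Fin N) (Fin K) ℝ) (V : Matrix (Fin K) (Fin K) ℝ)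
    (d : Fin K → ℝ)
    (hU : U.transpose * U = 1)
    (hV : V.transpose * V = 1) (hV' : V * V.transpose = 1)
    (hd : ∀ i, 0 ≤ d i)
    (hSVD : X * L = U * Matrix.diagonal d * V.transpose) :
    ((U * V.transpose).transpose * (U * V.transpose) = 1) ∧
    (∀ Z : Matrix (Fin N) (Fin K) ℝ, Z.transpose * Z = 1 →
      frobSq (X - (U * V.transpose) * L.transpose) ≤ frobSq (X - Z * L.transpose)) := by
  have horth : (U * Vᵀ)ᵀ * (U * Vᵀ) = 1 := by
    calc (U * Vᵀ)ᵀ * (U * Vᵀ) = V * (Uᵀ * U) * Vᵀ := by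
          simp [Matrix.transpose_mul, Matrix.mul_assoc]
    _ = 1 := by rw [hU, Matrix.mul_one, hV']
  refine ⟨horth, fun Z hZ => ?_⟩
  rw [frob_expand X L _ horth, frob_expand X L Z hZ]
  have key : ∀ W : Matrix (Fin N) (Fin K) ℝ, Wᵀ * W = 1 →
      (Wᵀ * (X * L)).trace ≤ ∑ i, d i := by
    intro W hW
    rw [hSVD]
    have h1 : Wᵀ * (U * Matrix.diagonal d * Vᵀ) = Wᵀ * U * Matrix.diagonal d * Vᵀ := by
      simp [Matrix.mul_assoc]
    rw [h1, Matrix.trace_mul_comm, ← Matrix.mul_assoc]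
    have h2 : (Vᵀ * (Wᵀ * U) * Matrix.diagonal d).trace
        = ∑ i, (Vᵀ * Wᵀ * U) i i * d i := by
      simp [Matrix.trace, Matrix.diag, Matrix.mul_diagonal, Matrix.mul_assoc]
    rw [h2]
    apply Finset.sum_le_sum
    intro i _
    have hle : (Vᵀ * Wᵀ * U) i i ≤ 1 := by
      have hentry : (Vᵀ * Wᵀ * U) i i = ∑ k, (W * V) k i * U k i := by
        have : Vᵀ * Wᵀ = (W * V)ᵀ := by simp [Matrix.transpose_mul]
        rw [this]
        simp only [Matrix.mul_apply, Matrix.transpose_apply]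
      have hWV : ∑ k, ((W * V) k i)^2 = 1 := by
        have h : ((W * V)ᵀ * (W * V)) i i = 1 := by
          have : (W * V)ᵀ * (W * V) = Vᵀ * (Wᵀ * W) * V := by
            simp [Matrix.transpose_mul, Matrix.mul_assoc]
          rw [this, hW, Matrix.mul_one, hV]
          simp [Matrix.one_apply]
        simp only [Matrix.mul_apply, Matrix.transpose_apply] at h
        rw [← h]
        exact Finset.sum_congr rfl fun k _ => by rw [sq, Matrix.mul_apply]
      have hUU : ∑ k, (U k i)^2 = 1 := by
        have h : (Uᵀ * U) i i = 1 := by rw [hU]; simp [Matrix.one_apply]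
        simpa [Matrix.mul_apply, sq] using h
      have cs := Finset.sum_mul_sq_le_sq_mul_sq Finset.univ
        (fun k => (W * V) k i) (fun k => U k i)
      rw [hWV, hUU, mul_one] at cs
      nlinarith [cs, hentry]
    nlinarith [hd i, hle]
  have keq : ((U * Vᵀ)ᵀ * (X * L)).trace = ∑ i, d i := by
    rw [hSVD]
    have : (U * Vᵀ)ᵀ * (U * Matrix.diagonal d * Vᵀ)
        = V * ((Uᵀ * U) * Matrix.diagonal d) * Vᵀ := by
      simp [Matrix.transpose_mul, Matrix.mul_assoc]
    rw [this, hU, Matrix.one_mul, Matrix.trace_mul_comm, ← Matrix.mul_assoc, hV,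
      Matrix.one_mul, Matrix.trace_diagonal]
  have hZle := key Z hZ
  have h1 : ((U * Vᵀ)ᵀ * X * L).trace = ∑ i, d i := by
    rw [Matrix.mul_assoc]; exact keq
  have h2 : (Zᵀ * X * L).trace ≤ ∑ i, d i := by
    rw [Matrix.mul_assoc]; exact hZle
  rw [h1]
  linarith
end

section
/- For any real number a and λ > 0 with |a| ≠ sqrt(2λ), the hard thresholding value S_0(a;λ') := a·1(|a| > λ') with λ' = sqrt(2λ) is a minimizer over l ∈ ℝ of (1/2)(l - a)^2 + λ·1(l ≠ 0). -/
open Matrix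

/-- Hard thresholding at `√(2λ)` minimizes the L0-penalized objective
`(1/2)(l - a)² + λ·1(l ≠ 0)`, provided `|a| ≠ √(2λ)`. -/
theorem stmt7 (a lam : ℝ) (hlam : 0 < lam) (ha : |a| ≠ Real.sqrt (2 * lam)) :
    ∀ l : ℝ,
      (1/2) * ((if Real.sqrt (2 * lam) < |a| then a else 0) - a)^2
          + (if (if Real.sqrt (2 * lam) < |a| then a else 0) = 0 then 0 else lam)
        ≤ (1/2) * (l - a)^2 + (if l = 0 then 0 else lam) := by
  intro l
  have hs : 0 < Real.sqrt (2 * lam) := Real.sqrt_pos.mpr (by linarith)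
  by_cases hc : Real.sqrt (2 * lam) < |a|
  · have ha0 : a ≠ 0 := by
      intro h; rw [h, abs_zero] at hc; linarith
    have h2 : 2 * lam < a ^ 2 := by
      have := Real.sq_sqrt (by linarith : (0:ℝ) ≤ 2 * lam)
      nlinarith [abs_nonneg a, sq_abs a]
    simp only [if_pos hc, if_neg ha0]
    by_cases hl : l = 0
    · simp [hl]; nlinarith
    · simp [hl]; nlinarith [sq_nonneg (l - a)]
  · have hlt : |a| < Real.sqrt (2 * lam) := lt_of_le_of_ne (not_lt.mp hc) ha
    have h2 : a ^ 2 < 2 * lam := by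
      have := Real.sq_sqrt (by linarith : (0:ℝ) ≤ 2 * lam)
      nlinarith [abs_nonneg a, sq_abs a]
    simp only [if_neg hc, if_pos rfl]
    by_cases hl : l = 0
    · simp [hl]
    · simp [hl]; nlinarith [sq_nonneg (l - a)]
end

section
/- Given diagonal positive precision matrix T = diag(τ_1,...,τ_P) with all τ_p > 0, X an N-by-P real matrix and L a P-by-K real matrix, the minimum over Z with Z^T Z = I_K of Σ_{n,p} τ_p (x_{n,p} - (Z L^T)_{n,p})^2 is achieved by Z = Polar.U(X T L). -/
open Matrix

section Aux

variable {N P K : ℕ}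

lemma aux_trace_sq (tau : Fin P → ℝ) (B : Matrix (Fin N) (Fin P) ℝ) :
    Matrix.trace (B * Matrix.diagonal tau * B.transpose)
      = ∑ n, ∑ p, tau p * (B n p)^2 := by
  simp [Matrix.trace, Matrix.mul_apply, Matrix.diagonal, Matrix.diag, Finset.sum_mul]
  congr 1; ext n; congr 1; ext p; ring

lemma aux_trace_cross (tau : Fin P → ℝ) (X : Matrix (Fin N) (Fin P) ℝ)
    (L : Matrix (Fin P) (Fin K) ℝ) (Z : Matrix (Fin N) (Fin K) ℝ) :
    Matrix.trace (Z.transpose * (X * Matrix.diagonal tau * L))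
      = ∑ n, ∑ p, tau p * (X n p * (Z * L.transpose) n p) := by
  simp [Matrix.trace, Matrix.mul_apply, Matrix.diagonal, Matrix.diag,
    Finset.sum_mul, Finset.mul_sum]
  rw [Finset.sum_comm]
  congr 1; ext n
  rw [Finset.sum_comm]
  congr 1; ext p
  congr 1; ext k
  ring

-- projection diag bound
lemma aux_proj_bound (U Z : Matrix (Fin N) (Fin K) ℝ)
    (hU : U.transpose * U = 1) (hZ : Z.transpose * Z = 1) (i : Fin K) :
    (U.transpose * (Z * Z.transpose) * U) i i ≤ 1 := by
  set M : Matrix (Fin N) (Fin N) ℝ := 1 - Z * Z.transpose with hMdef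
  have hMT : M.transpose = M := by
    simp [hMdef, Matrix.transpose_sub, Matrix.transpose_mul]
  have hMM : M * M = M := by
    simp only [hMdef, Matrix.sub_mul, Matrix.mul_sub, Matrix.one_mul, Matrix.mul_one]
    have : Z * Z.transpose * (Z * Z.transpose) = Z * Z.transpose := by
      calc Z * Z.transpose * (Z * Z.transpose) = Z * (Z.transpose * Z) * Z.transpose := by
            simp [Matrix.mul_assoc]
        _ = Z * Z.transpose := by rw [hZ]; simp
    rw [this]; abel
  have hfac : U.transpose * M * U = (M * U).transpose * (M * U) := by
    rw [Matrix.transpose_mul, hMT]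
    calc U.transpose * M * U = U.transpose * (M * M) * U := by rw [hMM]
      _ = U.transpose * M * (M * U) := by simp [Matrix.mul_assoc]
  have hpos : 0 ≤ (U.transpose * M * U) i i := by
    rw [hfac]
    simp only [Matrix.mul_apply, Matrix.transpose_apply]
    exact Finset.sum_nonneg fun n _ => mul_self_nonneg _
  have hexp : (U.transpose * M * U) i i
      = 1 - (U.transpose * (Z * Z.transpose) * U) i i := by
    have : U.transpose * M * U
        = U.transpose * U - U.transpose * (Z * Z.transpose) * U := by
      simp [hMdef, Matrix.mul_sub, Matrix.sub_mul, Matrix.mul_assoc]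
    rw [this, hU]
    simp [Matrix.sub_apply, Matrix.one_apply_eq]
  linarith [hpos, hexp ▸ hpos]

end Aux

/-- Heteroskedastic reduced-rank Procrustes: with `T = diagonal τ`, `τ_p > 0`, and
`X T L = U diagonal d Vᵀ` an SVD, the matrix `Z = U Vᵀ` has orthonormal columns and
minimizes the weighted loss `Σ_{n,p} τ_p (x_{n,p} - (Z Lᵀ)_{n,p})²` over all such `Z`. -/
theorem stmt15 {N P K : ℕ}
    (tau : Fin P → ℝ) (htau : ∀ p, 0 < tau p)
    (X : Matrix (Fin N) (Fin P) ℝ) (L : Matrix (Fin P) (Fin K) ℝ)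
    (U : Matrix (Fin N) (Fin K) ℝ) (V : Matrix (Fin K) (Fin K) ℝ) (d : Fin K → ℝ)
    (hU : U.transpose * U = 1)
    (hV : V.transpose * V = 1) (hV' : V * V.transpose = 1)
    (hd : ∀ i, 0 ≤ d i)
    (hSVD : X * Matrix.diagonal tau * L = U * Matrix.diagonal d * V.transpose) :
    ((U * V.transpose).transpose * (U * V.transpose) = 1) ∧
    ∀ Z : Matrix (Fin N) (Fin K) ℝ, Z.transpose * Z = 1 →
      ∑ n, ∑ p, tau p * (X n p - ((U * V.transpose) * L.transpose) n p)^2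
        ≤ ∑ n, ∑ p, tau p * (X n p - (Z * L.transpose) n p)^2 := by
  have hZstar : (U * V.transpose).transpose * (U * V.transpose) = 1 := by
    calc (U * V.transpose).transpose * (U * V.transpose)
        = V * (U.transpose * U) * V.transpose := by
          rw [Matrix.transpose_mul, Matrix.transpose_transpose]; simp [Matrix.mul_assoc]
      _ = 1 := by rw [hU]; simpa using hV'
  refine ⟨hZstar, ?_⟩
  -- loss decomposition
  have key : ∀ Z : Matrix (Fin N) (Fin K) ℝ, Z.transpose * Z = 1 →
      ∑ n, ∑ p, tau p * (X n p - (Z * L.transpose) n p)^2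
        = (∑ n, ∑ p, tau p * (X n p)^2)
          + Matrix.trace (L.transpose * Matrix.diagonal tau * L)
          - 2 * Matrix.trace (Z.transpose * (X * Matrix.diagonal tau * L)) := by
    intro Z hZ
    have h1 : Matrix.trace (Z * L.transpose * Matrix.diagonal tau * (Z * L.transpose).transpose)
        = Matrix.trace (L.transpose * Matrix.diagonal tau * L) := by
      rw [Matrix.transpose_mul, Matrix.transpose_transpose]
      calc Matrix.trace (Z * L.transpose * Matrix.diagonal tau * (L * Z.transpose))
          = Matrix.trace (Z * (L.transpose * Matrix.diagonal tau * L) * Z.transpose) := by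
            simp [Matrix.mul_assoc]
        _ = Matrix.trace (Z.transpose * (Z * (L.transpose * Matrix.diagonal tau * L))) := by
            rw [Matrix.trace_mul_comm]
        _ = Matrix.trace ((Z.transpose * Z) * (L.transpose * Matrix.diagonal tau * L)) := by
            rw [← Matrix.mul_assoc]
        _ = _ := by rw [hZ, Matrix.one_mul]
    rw [← h1, aux_trace_sq tau (Z * L.transpose), aux_trace_cross tau X L Z]
    rw [← Finset.sum_add_distrib, Finset.mul_sum, ← Finset.sum_sub_distrib]
    congr 1; ext n
    rw [← Finset.sum_add_distrib, Finset.mul_sum, ← Finset.sum_sub_distrib]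
    congr 1; ext p
    ring
  intro Z hZ
  rw [key Z hZ, key (U * V.transpose) hZstar]
  have hle : Matrix.trace (Z.transpose * (X * Matrix.diagonal tau * L))
      ≤ Matrix.trace ((U * V.transpose).transpose * (X * Matrix.diagonal tau * L)) := by
    rw [hSVD]
    -- RHS equals ∑ d i
    have hrhs : Matrix.trace ((U * V.transpose).transpose * (U * Matrix.diagonal d * V.transpose))
        = ∑ i, d i := by
      have : (U * V.transpose).transpose * (U * Matrix.diagonal d * V.transpose)
          = V * Matrix.diagonal d * V.transpose := by
        rw [Matrix.transpose_mul, Matrix.transpose_transpose]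
        calc V * U.transpose * (U * Matrix.diagonal d * V.transpose)
            = V * (U.transpose * U) * Matrix.diagonal d * V.transpose := by simp [Matrix.mul_assoc]
          _ = V * Matrix.diagonal d * V.transpose := by rw [hU]; simp [Matrix.mul_assoc]
      rw [this, Matrix.trace_mul_cycle, hV, Matrix.one_mul, Matrix.trace_diagonal]
    rw [hrhs]
    -- LHS = ∑ i, d i * W i i with W = Vᵀ Zᵀ U
    set W : Matrix (Fin K) (Fin K) ℝ := V.transpose * Z.transpose * U with hWdef
    have hlhs : Matrix.trace (Z.transpose * (U * Matrix.diagonal d * V.transpose))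
        = ∑ i, d i * W i i := by
      have : Z.transpose * (U * Matrix.diagonal d * V.transpose)
          = (Z.transpose * U * Matrix.diagonal d) * V.transpose := by simp [Matrix.mul_assoc]
      rw [this, Matrix.trace_mul_comm]
      have : V.transpose * (Z.transpose * U * Matrix.diagonal d)
          = W * Matrix.diagonal d := by rw [hWdef]; simp [Matrix.mul_assoc]
      rw [this]
      simp [Matrix.trace, Matrix.diag, Matrix.mul_apply, Matrix.diagonal]
      congr 1; ext i; ring
    rw [hlhs]
    -- bound each W i i ≤ 1
    apply Finset.sum_le_sum
    intro i _
    have hWW : W.transpose * W = U.transpose * (Z * Z.transpose) * U := by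
      rw [hWdef]
      simp only [Matrix.transpose_mul, Matrix.transpose_transpose, Matrix.mul_assoc]
      rw [← Matrix.mul_assoc V, hV', Matrix.one_mul]
    have hdiag : (W.transpose * W) i i ≤ 1 := by
      rw [hWW]; exact aux_proj_bound U Z hU hZ i
    have hsq : (W i i)^2 ≤ (W.transpose * W) i i := by
      simp only [Matrix.mul_apply, Matrix.transpose_apply]
      have h := Finset.single_le_sum (f := fun j => W j i * W j i)
        (fun j _ => mul_self_nonneg _) (Finset.mem_univ i)
      simpa [pow_two] using h
    have hW1 : W i i ≤ 1 := by nlinarith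
    simpa using mul_le_mul_of_nonneg_left hW1 (hd i)
  linarith
end
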